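/- Let V be a 6-dimensional real vector space, ω an alternating 3-form on V, and θ a nonzero alternating 6-form on V. Then there exists a unique linear map Q : V → V such that (ι_vω)∧ω = ι_{Q(v)}θ for all v ∈ V. -/

import Mathlib

open scoped TensorProduct

/-- The wedge product of real-valued alternating forms
(antisymmetrized shuffle-sum convention, via `AlternatingMap.domCoprod`). -/
noncomputable def wedge {V : Type*} [AddCommGroup V] [Module ℝ V] {p q : ℕ}
    (α : V [⋀^Fin p]→ₗ[ℝ] ℝ) (β : V [⋀^Fin q]→ₗ[ℝ] ℝ) : V [⋀^Fin (p + q)]→ₗ[ℝ] ℝ :=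
  ((LinearMap.mul' ℝ ℝ).compAlternatingMap (α.domCoprod β)).domDomCongr finSumFinEquiv

/-- The interior product `ι_v ω = ω(v, ·, …, ·)`. -/
noncomputable def iota {V : Type*} [AddCommGroup V] [Module ℝ V] {n : ℕ}
    (v : V) (ω : V [⋀^Fin (n + 1)]→ₗ[ℝ] ℝ) : V [⋀^Fin n]→ₗ[ℝ] ℝ :=
  ω.curryLeft v

/-- `Δ(ω) = {v ∈ V : (ι_v ω) ∧ (ι_v ω) = 0}` for a 3-form `ω`. -/
noncomputable def Delta {V : Type*} [AddCommGroup V] [Module ℝ V]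
    (ω : V [⋀^Fin 3]→ₗ[ℝ] ℝ) : Set V :=
  {v | wedge (iota v ω) (iota v ω) = 0}

/-- A form is multisymplectic iff `v ↦ ι_v ω` is injective. -/
noncomputable def Multisymplectic {V : Type*} [AddCommGroup V] [Module ℝ V] {n : ℕ}
    (ω : V [⋀^Fin (n + 1)]→ₗ[ℝ] ℝ) : Prop :=
  Function.Injective fun v : V => iota v ω

section test
variable {V : Type*} [AddCommGroup V] [Module ℝ V] {p q : ℕ}

lemma wedge_add_left (α α' : V [⋀^Fin p]→ₗ[ℝ] ℝ) (β : V [⋀^Fin q]→ₗ[ℝ] ℝ) :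
    wedge (α + α') β = wedge α β + wedge α' β := by
  have h : (α + α').domCoprod β = α.domCoprod β + α'.domCoprod β := by
    rw [← AlternatingMap.domCoprod'_apply, ← AlternatingMap.domCoprod'_apply,
      ← AlternatingMap.domCoprod'_apply, TensorProduct.add_tmul, map_add]
  unfold wedge
  rw [h, LinearMap.compAlternatingMap_add, AlternatingMap.domDomCongr_add]

lemma wedge_smul_left (c : ℝ) (α : V [⋀^Fin p]→ₗ[ℝ] ℝ) (β : V [⋀^Fin q]→ₗ[ℝ] ℝ) :
    wedge (c • α) β = c • wedge α β := by
  have h : (c • α).domCoprod β = c • α.domCoprod β := by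
    rw [← AlternatingMap.domCoprod'_apply, ← AlternatingMap.domCoprod'_apply,
      ← TensorProduct.smul_tmul', map_smul]
  unfold wedge
  rw [h, LinearMap.compAlternatingMap_smul, AlternatingMap.domDomCongr_smul]

end test

lemma altSum_apply {V : Type*} [AddCommGroup V] [Module ℝ V] {n : ℕ} {α : Type*}
    (f : α → (V [⋀^Fin n]→ₗ[ℝ] ℝ)) {s : Finset α} (m : Fin n → V) :
    (∑ a ∈ s, f a) m = ∑ a ∈ s, f a m := by
  classical
  induction s using Finset.cons_induction with
  | empty => simp
  | cons a s ha ih => simp [Finset.sum_insert ha, ih, AlternatingMap.add_apply]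

/-- permutation of `Fin 6` sending `0 ↦ i`, `k.succ ↦ i.succAbove k`. -/
noncomputable def perm6 (i : Fin 6) : Equiv.Perm (Fin 6) :=
  (finSuccEquiv 5).trans (finSuccEquiv' i).symm

lemma perm6_zero (i : Fin 6) : perm6 i 0 = i := by
  simp [perm6]

lemma perm6_succ (i : Fin 6) (k : Fin 5) : perm6 i k.succ = i.succAbove k := by
  simp [perm6]

section main
variable {V : Type*} [AddCommGroup V] [Module ℝ V]

lemma iota_eval (b : Module.Basis (Fin 6) ℝ V) (θ : V [⋀^Fin 6]→ₗ[ℝ] ℝ) (w : V) (i : Fin 6) :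
    iota w θ (fun j => b (i.succAbove j)) =
      b.repr w i * (((Equiv.Perm.sign (perm6 i) : ℤ) : ℝ) * θ b) := by
  classical
  set t : Fin 5 → V := fun j => b (i.succAbove j) with ht
  have hw : iota w θ = θ.curryLeft w := rfl
  conv_lhs => rw [hw, ← b.sum_repr w, map_sum]
  rw [altSum_apply]
  rw [Finset.sum_eq_single i]
  · have hfun : Fin.cons (b i) t = fun x => b (perm6 i x) := by
      funext x
      refine Fin.cases ?_ ?_ x
      · rw [Fin.cons_zero, perm6_zero]
      · intro k
        rw [Fin.cons_succ, perm6_succ]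
    rw [map_smul, AlternatingMap.smul_apply, AlternatingMap.curryLeft_apply_apply]
    rw [show Matrix.vecCons (b i) t = Fin.cons (b i) t from rfl, hfun]
    rw [show (fun x => b (perm6 i x)) = b ∘ (perm6 i) from rfl, θ.map_perm b (perm6 i)]
    rw [smul_eq_mul]
    congr 1
    rw [Units.smul_def, zsmul_eq_mul]
  · intro j _ hj
    obtain ⟨k, hk⟩ := Fin.exists_succAbove_eq (Ne.symm hj : (i:Fin 6) ≠ j).symm
    rw [map_smul, AlternatingMap.smul_apply, AlternatingMap.curryLeft_apply_apply]
    rw [show Matrix.vecCons (b j) t = Fin.cons (b j) t from rfl]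
    rw [θ.map_eq_zero_of_eq (Fin.cons (b j) t) (i := 0) (j := k.succ) (by
      rw [Fin.cons_zero, Fin.cons_succ]; show b j = b (i.succAbove k); rw [hk]) (Ne.symm (Fin.succ_ne_zero k))]
    simp
  · intro h; exact absurd (Finset.mem_univ i) h

lemma ext5 (b : Module.Basis (Fin 6) ℝ V) (η₁ η₂ : V [⋀^Fin 5]→ₗ[ℝ] ℝ)
    (h : ∀ i : Fin 6, η₁ (fun j => b (i.succAbove j)) = η₂ (fun j => b (i.succAbove j))) :
    η₁ = η₂ := by
  classical
  refine Module.Basis.ext_alternating b ?_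
  intro v hv
  have hns : ¬ Function.Surjective v := by
    intro hs
    have := Fintype.card_le_of_surjective v hs
    simp at this
  unfold Function.Surjective at hns
  push_neg at hns
  obtain ⟨i, hi⟩ := hns
  have hvne : ∀ j, v j ≠ i := fun j hj => hi j hj
  choose u hu using fun j => Fin.exists_succAbove_eq (hvne j)
  have huinj : Function.Injective u := by
    intro a c hac
    apply hv
    rw [← hu a, ← hu c, hac]
  have hubij : Function.Bijective u := (Finite.injective_iff_bijective).mp huinj
  let τ : Equiv.Perm (Fin 5) := Equiv.ofBijective u hubij
  have hcomp : (fun j => b (v j)) = (fun j => b (i.succAbove j)) ∘ τ := by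
    funext j
    simp only [Function.comp_apply]
    rw [show (τ j : Fin 5) = u j from rfl, hu j]
  rw [hcomp, η₁.map_perm, η₂.map_perm, h i]

end main

/-- Existence and uniqueness of the linear map `Q` with `(ι_v ω) ∧ ω = ι_{Q v} θ`. -/
theorem exists_unique_Q
    {V : Type*} [AddCommGroup V] [Module ℝ V] [FiniteDimensional ℝ V]
    (hV : Module.finrank ℝ V = 6)
    (ω : V [⋀^Fin 3]→ₗ[ℝ] ℝ) (θ : V [⋀^Fin 6]→ₗ[ℝ] ℝ) (hθ : θ ≠ 0) :
    ∃! Q : V →ₗ[ℝ] V, ∀ v : V, wedge (iota v ω) ω = iota (Q v) θ := by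
  classical
  let b : Module.Basis (Fin 6) ℝ V := Module.finBasisOfFinrankEq ℝ V hV
  have hθb : θ (⇑b) ≠ 0 := by
    intro h
    exact hθ (by rw [θ.eq_smul_basis_det b, h, zero_smul])
  set s : Fin 6 → ℝ := fun i => ((Equiv.Perm.sign (perm6 i) : ℤ) : ℝ) with hs
  have hsne : ∀ i, s i ≠ 0 := fun i =>
    Int.cast_ne_zero.mpr (Units.ne_zero _)
  set g : Fin 6 → ℝ := fun i => s i * θ ⇑b with hgdef
  have hg : ∀ i, g i ≠ 0 := fun i => mul_ne_zero (hsne i) hθb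
  set t : Fin 6 → Fin 5 → V := fun i j => b (i.succAbove j) with htdef
  have hiota_add : ∀ (x y : V), iota (x + y) ω = iota x ω + iota y ω := fun x y => by
    show ω.curryLeft (x + y) = ω.curryLeft x + ω.curryLeft y
    rw [map_add]
  have hiota_smul : ∀ (c : ℝ) (x : V), iota (c • x) ω = c • iota x ω := fun c x => by
    show ω.curryLeft (c • x) = c • ω.curryLeft x
    rw [map_smul]
  let Q : V →ₗ[ℝ] V :=
    { toFun := fun v => ∑ i, ((g i)⁻¹ * (wedge (iota v ω) ω) (t i)) • b i
      map_add' := by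
        intro x y
        rw [← Finset.sum_add_distrib]
        refine Finset.sum_congr rfl fun i _ => ?_
        rw [hiota_add, wedge_add_left, AlternatingMap.add_apply, mul_add, add_smul]
      map_smul' := by
        intro c x
        rw [Finset.smul_sum]
        refine Finset.sum_congr rfl fun i _ => ?_
        rw [hiota_smul, wedge_smul_left, AlternatingMap.smul_apply, smul_eq_mul,
          smul_smul, RingHom.id_apply]
        ring_nf }
  have hrepr : ∀ (v : V) (i : Fin 6),
      b.repr (Q v) i = (g i)⁻¹ * (wedge (iota v ω) ω) (t i) := by
    intro v i
    have h1 : Q v = ∑ j, ((g j)⁻¹ * (wedge (iota v ω) ω) (t j)) • b j := rfl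
    rw [h1]
    exact congrFun (b.repr_sum_self fun j => (g j)⁻¹ * (wedge (iota v ω) ω) (t j)) i
  have hmain : ∀ v : V, wedge (iota v ω) ω = iota (Q v) θ := by
    intro v
    refine ext5 b _ _ fun i => ?_
    rw [show (fun j => b (i.succAbove j)) = t i from rfl]
    rw [iota_eval b θ (Q v) i, hrepr v i]
    rw [show ((Equiv.Perm.sign (perm6 i) : ℤ) : ℝ) * θ ⇑b = g i from rfl]
    rw [mul_comm (g i)⁻¹ _, mul_assoc, inv_mul_cancel₀ (hg i), mul_one]
  refine ⟨Q, hmain, ?_⟩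
  intro Q' hQ'
  refine LinearMap.ext fun v => ?_
  have h1 : iota (Q' v) θ = iota (Q v) θ := by rw [← hQ' v, ← hmain v]
  have h2 : ∀ i, b.repr (Q' v) i * (s i * θ ⇑b) = b.repr (Q v) i * (s i * θ ⇑b) := by
    intro i
    rw [← iota_eval b θ (Q' v) i, ← iota_eval b θ (Q v) i, h1]
  exact b.repr.injective (Finsupp.ext fun i => mul_right_cancel₀ (hg i) (h2 i))
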